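/- Let m_1, ..., m_n be integers with m_i ≥ 2 and s/t = [m_1, ..., m_n] with 0 < t < s coprime. Let M^1 be the matrix obtained from the tridiagonal matrix M(m_1, ..., m_n) (diagonal -m_i, off-diagonals 1) by replacing its first column with the column vector (m_1-2, m_2-2, ..., m_n-2)^T. Then det M^1 = (-1)^{n+1}(s - t - 1). -/

import Mathlib

/-- Hirzebruch–Jung continued fraction `[m₁, …, mₙ] = m₁ - 1/(m₂ - 1/(… - 1/mₙ))`. -/
def hjCF : List ℤ → ℚ
  | [] => 0
  | a :: l => (a : ℚ) - (hjCF l)⁻¹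

/-- The tridiagonal matrix with `-mᵢ` on the diagonal and `1` on the sub- and
super-diagonals. -/
def triM {n : ℕ} (m : Fin n → ℤ) : Matrix (Fin n) (Fin n) ℤ :=
  Matrix.of fun i j =>
    if i = j then -m i
    else if (i : ℕ) + 1 = (j : ℕ) ∨ (j : ℕ) + 1 = (i : ℕ) then 1 else 0

/-- The Hirzebruch–Jung continuant. -/
def Kf : (n : ℕ) → (Fin n → ℤ) → ℤ
  | 0, _ => 1
  | 1, m => m 0
  | (n+2), m => m 0 * Kf (n+1) (fun i => m i.succ) - Kf n (fun i => m i.succ.succ)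

lemma Kf_pos_lt : ∀ (n : ℕ) (m : Fin (n+1) → ℤ), (∀ i, 2 ≤ m i) →
    0 < Kf n (fun i => m i.succ) ∧ Kf n (fun i => m i.succ) < Kf (n+1) m
  | 0, m, hm => by
      simp only [Kf]
      exact ⟨one_pos, by linarith [hm 0]⟩
  | (n+1), m, hm => by
      obtain ⟨h1, h2⟩ := Kf_pos_lt n (fun i => m i.succ) (fun i => hm _)
      constructor
      · linarith
      · show Kf (n+1) _ < m 0 * Kf (n+1) (fun i => m i.succ) - Kf n _
        nlinarith [hm 0]

lemma Kf_coprime : ∀ (n : ℕ) (m : Fin (n+1) → ℤ),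
    IsCoprime (Kf (n+1) m) (Kf n (fun i => m i.succ))
  | 0, m => by simpa [Kf] using isCoprime_one_right
  | (n+1), m => by
      have ih := Kf_coprime n (fun i => m i.succ)
      show IsCoprime (m 0 * Kf (n+1) (fun i => m i.succ) - Kf n _) (Kf (n+1) (fun i => m i.succ))
      have := (ih.symm.neg_left.add_mul_left_left (m 0))
      simpa [sub_eq_add_neg, add_comm, mul_comm] using this

lemma hjCF_eq : ∀ (n : ℕ) (m : Fin (n+1) → ℤ), (∀ i, 2 ≤ m i) →
    hjCF (List.ofFn m) = (Kf (n+1) m : ℚ) / (Kf n (fun i => m i.succ) : ℚ)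
  | 0, m, hm => by simp [List.ofFn_succ, hjCF, Kf]
  | (n+1), m, hm => by
      have ih := hjCF_eq n (fun i => m i.succ) (fun i => hm _)
      obtain ⟨h1, h2⟩ := Kf_pos_lt n (fun i => m i.succ) (fun i => hm _)
      have hq1 : (Kf (n+1) (fun i => m i.succ) : ℚ) ≠ 0 := by
        exact_mod_cast (by linarith : Kf (n+1) (fun i => m i.succ) ≠ 0)
      have hq2 : (Kf n (fun i => (m i.succ.succ)) : ℚ) ≠ 0 := by
        exact_mod_cast h1.ne'
      rw [List.ofFn_succ, hjCF, ih]
      show (m 0 : ℚ) - _ = ((m 0 * Kf (n+1) (fun i => m i.succ)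
        - Kf n (fun i => m i.succ.succ) : ℤ) : ℚ) / _
      push_cast
      rw [inv_div]
      field_simp

lemma triM_succ_succ {n : ℕ} (m : Fin (n+1) → ℤ) :
    (triM m).submatrix Fin.succ Fin.succ = triM (fun i => m i.succ) := by
  ext i j
  simp only [Matrix.submatrix_apply, triM, Matrix.of_apply, Fin.val_succ, Fin.succ_inj]
  rcases eq_or_ne i j with h | h
  · simp [h]
  · rw [if_neg h, if_neg h,
      if_congr (by omega : ((i:ℕ)+1+1 = (j:ℕ)+1 ∨ (j:ℕ)+1+1 = (i:ℕ)+1) ↔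
        ((i:ℕ)+1 = (j:ℕ) ∨ (j:ℕ)+1 = (i:ℕ))) rfl rfl]

lemma succAbove_one_zero {n : ℕ} : (1 : Fin (n+2)).succAbove 0 = 0 := Fin.one_succAbove_zero

lemma triM_zero_succ_succ {n : ℕ} (m : Fin (n+2) → ℤ) (k : Fin n) :
    triM m 0 k.succ.succ = 0 := by
  simp only [triM, Matrix.of_apply]
  rw [if_neg (by simp [Fin.ext_iff]), if_neg (by simp only [Fin.val_succ, Fin.val_zero]; omega)]

lemma detB {n : ℕ} (m : Fin (n+2) → ℤ) :
    ((triM m).submatrix Fin.succ ((1 : Fin (n+2)).succAbove)).det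
      = (triM (fun i => m i.succ.succ)).det := by
  rw [Matrix.det_succ_column_zero, Fin.sum_univ_succ]
  have h00 : ((triM m).submatrix Fin.succ ((1 : Fin (n+2)).succAbove)) 0 0 = 1 := by
    simp only [Matrix.submatrix_apply, succAbove_one_zero, triM, Matrix.of_apply]
    rw [if_neg (by simp [Fin.ext_iff]), if_pos (by simp)]
  have hz : ∀ i : Fin n,
      ((triM m).submatrix Fin.succ ((1 : Fin (n+2)).succAbove)) i.succ 0 = 0 := by
    intro i
    simp only [Matrix.submatrix_apply, succAbove_one_zero, triM, Matrix.of_apply]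
    rw [if_neg (by simp [Fin.ext_iff]), if_neg (by simp [Fin.ext_iff])]
  rw [h00]
  have hsub : (((triM m).submatrix Fin.succ ((1 : Fin (n+2)).succAbove)).submatrix
      (0 : Fin (n+1)).succAbove Fin.succ) = triM (fun i => m i.succ.succ) := by
    ext i j
    simp only [Matrix.submatrix_apply, Fin.zero_succAbove, Fin.one_succAbove_succ]
    have h1 := congrFun (congrFun (triM_succ_succ (fun i => m i.succ)) i) j
    simp only [Matrix.submatrix_apply] at h1
    rw [← h1]
    have h2 := congrFun (congrFun (triM_succ_succ m) i.succ) j.succ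
    simp only [Matrix.submatrix_apply] at h2
    rw [← h2]
  rw [hsub]
  simp only [hz]
  simp

lemma triM_zero_zero {n : ℕ} (m : Fin (n+1) → ℤ) : triM m 0 0 = -m 0 := by
  simp [triM]

lemma triM_zero_one {n : ℕ} (m : Fin (n+2) → ℤ) : triM m 0 1 = 1 := by
  simp only [triM, Matrix.of_apply]
  rw [if_neg (by simp [Fin.ext_iff]), if_pos (by simp)]

lemma detT : ∀ (n : ℕ) (m : Fin n → ℤ), (triM m).det = (-1)^n * Kf n m
  | 0, m => by simp [Kf]
  | 1, m => by
      rw [Matrix.det_fin_one]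
      simp [triM, Kf]
  | (n+2), m => by
      rw [Matrix.det_succ_row_zero, Fin.sum_univ_succ, Fin.sum_univ_succ]
      simp only [Fin.succ_zero_eq_one]
      rw [Finset.sum_eq_zero (fun k _ => by
        rw [triM_zero_succ_succ]; ring)]
      rw [triM_zero_zero, triM_zero_one]
      rw [show ((0 : Fin (n+2)).succAbove) = Fin.succ from Fin.succAbove_zero,
        triM_succ_succ, detT (n+1), detB, detT n]
      show _ = (-1)^(n+2) * (m 0 * Kf (n+1) (fun i => m i.succ) - Kf n (fun i => m i.succ.succ))
      simp only [Fin.val_zero, Fin.val_one, pow_zero, pow_one]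
      ring

lemma detA : ∀ (n : ℕ) (m : Fin (n+1) → ℤ),
    ((triM m).updateCol 0 (fun i => m i - 2)).det
      = (-1)^n * (Kf (n+1) m - Kf n (fun i => m i.succ) - 1)
  | 0, m => by
      rw [Matrix.det_fin_one]
      simp only [Matrix.updateCol_apply, if_pos rfl]
      show m 0 - 2 = (-1)^0 * (m 0 - 1 - 1)
      ring
  | (n+1), m => by
      set A := (triM m).updateCol 0 (fun i => m i - 2) with hA
      rw [Matrix.det_succ_row_zero, Fin.sum_univ_succ, Fin.sum_univ_succ]
      simp only [Fin.succ_zero_eq_one]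
      rw [Finset.sum_eq_zero (fun k _ => by
        have : A 0 k.succ.succ = 0 := by
          rw [hA, Matrix.updateCol_apply, if_neg (by simp [Fin.ext_iff]),
            triM_zero_succ_succ]
        rw [this]; ring)]
      have e00 : A 0 0 = m 0 - 2 := by
        rw [hA, Matrix.updateCol_apply, if_pos rfl]
      have e01 : A 0 1 = 1 := by
        rw [hA, Matrix.updateCol_apply, if_neg (by simp [Fin.ext_iff]), triM_zero_one]
      have h0 : (A.submatrix Fin.succ ((0 : Fin (n+2)).succAbove)).det
          = (-1)^(n+1) * Kf (n+1) (fun i => m i.succ) := by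
        have he : A.submatrix Fin.succ ((0 : Fin (n+2)).succAbove)
            = triM (fun i => m i.succ) := by
          ext i j
          rw [show ((0 : Fin (n+2)).succAbove) = Fin.succ from Fin.succAbove_zero]
          simp only [Matrix.submatrix_apply, hA, Matrix.updateCol_apply,
            if_neg (Fin.succ_ne_zero j)]
          exact congrFun (congrFun (triM_succ_succ m) i) j
        rw [he, detT (n+1)]
      have h1 : (A.submatrix Fin.succ ((1 : Fin (n+2)).succAbove)).det
          = (-1)^n * (Kf (n+1) (fun i => m i.succ) - Kf n (fun i => m i.succ.succ) - 1) := by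
        have he : A.submatrix Fin.succ ((1 : Fin (n+2)).succAbove)
            = (triM (fun i => m i.succ)).updateCol 0 (fun i => m i.succ - 2) := by
          ext i j
          rcases Fin.eq_zero_or_eq_succ j with rfl | ⟨k, rfl⟩
          · simp only [Matrix.submatrix_apply, succAbove_one_zero, hA,
              Matrix.updateCol_apply]
            simp
          · simp only [Matrix.submatrix_apply, Fin.one_succAbove_succ, hA,
              Matrix.updateCol_apply, if_neg (Fin.succ_ne_zero _)]
            have h2 := congrFun (congrFun (triM_succ_succ m) i) k.succ
            simp only [Matrix.submatrix_apply] at h2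
            exact h2
        rw [he, detA n]
      rw [e00, e01, h0, h1]
      show _ = (-1)^(n+1) * (m 0 * Kf (n+1) (fun i => m i.succ) - Kf n (fun i => m i.succ.succ)
        - Kf (n+1) (fun i => m i.succ) - 1)
      simp only [Fin.val_zero, Fin.val_one, pow_zero, pow_one]
      ring

theorem stmt3 (n : ℕ) (hn : 0 < n) (m : Fin n → ℤ) (s t : ℤ)
    (hm : ∀ i, 2 ≤ m i) (ht : 0 < t) (hts : t < s) (hcop : IsCoprime s t)
    (hcf : hjCF (List.ofFn m) = (s : ℚ) / t) :
    ((triM m).updateCol ⟨0, hn⟩ (fun i => m i - 2)).det = (-1) ^ (n + 1) * (s - t - 1) := by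
  rcases n with _ | k
  · exact absurd hn (lt_irrefl 0)
  · have hzero : (⟨0, hn⟩ : Fin (k+1)) = 0 := Fin.ext (by simp)
    rw [hzero, detA k m]
    obtain ⟨hq1, hq2⟩ := Kf_pos_lt k m hm
    set p := Kf (k+1) m with hp
    set q := Kf k (fun i => m i.succ) with hq
    have hcf2 := hjCF_eq k m hm
    rw [hcf2] at hcf
    have hq0 : (q : ℚ) ≠ 0 := by exact_mod_cast hq1.ne'
    have ht0 : (t : ℚ) ≠ 0 := by exact_mod_cast ht.ne'
    rw [div_eq_div_iff hq0 ht0] at hcf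
    have hint : p * t = s * q := by exact_mod_cast hcf
    have hcp : IsCoprime p q := Kf_coprime k m
    have htq : t = q := by
      apply Int.dvd_antisymm ht.le hq1.le
      · exact hcop.symm.dvd_of_dvd_mul_left (hint ▸ dvd_mul_left t p)
      · exact hcp.symm.dvd_of_dvd_mul_left (by rw [hint]; exact dvd_mul_left q s)
    have hps : p = s := by
      have := hint
      rw [htq] at this
      exact mul_right_cancel₀ hq1.ne' this
    rw [hps, ← htq]
    rw [show (k+1+1) = k + 2 from rfl, pow_add]
    ring
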